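/- Let X, Y be compact metrizable spaces and f : X → Y a continuous, surjective, irreducible map. If 𝒞 is a regular quasi-partition of X, then { f[C] : C ∈ 𝒞 } is a regular quasi-partition of Y, and the map C ↦ f[C] is a bijection from 𝒞 onto { f[C] : C ∈ 𝒞 }. -/

import Mathlib

/-- A regular closed set: a closed set equal to the closure of its interior. -/
def IsRegularClosed {X : Type*} [TopologicalSpace X] (C : Set X) : Prop :=
  IsClosed C ∧ C = closure (interior C)

/-- A regular quasi-partition: a covering by nonempty regular closed sets such that any two
distinct members intersect only on their boundaries. -/
def IsRegQuasiPartition {X : Type*} [TopologicalSpace X] (𝒞 : Set (Set X)) : Prop :=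
  ⋃₀ 𝒞 = Set.univ ∧ (∀ C ∈ 𝒞, C.Nonempty ∧ IsRegularClosed C) ∧
    ∀ C ∈ 𝒞, ∀ C' ∈ 𝒞, C ≠ C' → C ∩ C' ⊆ frontier C ∩ frontier C'

/-- The image of a regular quasi-partition under a continuous surjective irreducible map
between compact metrizable spaces is a regular quasi-partition, and taking images is a
bijection onto it. -/
theorem stmt_9 (X Y : Type*) [TopologicalSpace X] [TopologicalSpace Y]
    [CompactSpace X] [CompactSpace Y]
    [TopologicalSpace.MetrizableSpace X] [TopologicalSpace.MetrizableSpace Y]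
    (f : X → Y) (hf : Continuous f) (hfs : Function.Surjective f)
    (hirr : ∀ K : Set X, IsClosed K → K ≠ Set.univ → f '' K ≠ Set.univ)
    (𝒞 : Set (Set X)) (h𝒞 : IsRegQuasiPartition 𝒞) :
    IsRegQuasiPartition (Set.image f '' 𝒞) ∧ Set.InjOn (Set.image f) 𝒞 := by
  obtain ⟨hcov, hmem, hbd⟩ := h𝒞
  have hclosedmap : IsClosedMap f := hf.isClosedMap
  -- the "small image" of a set U : points of Y whose whole fiber lies in U
  set st : Set X → Set Y := fun U => (f '' Uᶜ)ᶜ with hst_def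
  have hst_open : ∀ U : Set X, IsOpen U → IsOpen (st U) := fun U hU =>
    (hclosedmap _ hU.isClosed_compl).isOpen_compl
  have hst_pre : ∀ U : Set X, f ⁻¹' (st U) ⊆ U := by
    intro U x hx
    by_contra h
    exact hx ⟨x, h, rfl⟩
  have hst_sub : ∀ U : Set X, st U ⊆ f '' U := by
    intro U y hy
    obtain ⟨x, rfl⟩ := hfs y
    exact ⟨x, hst_pre U hy, rfl⟩
  have hst_mono : ∀ U V : Set X, U ⊆ V → st U ⊆ st V := by
    intro U V hUV y hy hmem
    exact hy (Set.image_mono (f := f) (Set.compl_subset_compl.mpr hUV) hmem)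
  have hst_ne : ∀ U : Set X, IsOpen U → U.Nonempty → (st U).Nonempty := by
    intro U hU hne
    refine Set.nonempty_compl.mpr (hirr Uᶜ hU.isClosed_compl ?_)
    intro h
    exact hne.ne_empty (by simpa using h)
  -- images of closures of open sets are closures of small images
  have hcl : ∀ U : Set X, IsOpen U → f '' closure U ⊆ closure (st U) := by
    intro U hU y hy
    obtain ⟨x, hx, rfl⟩ := hy
    rw [mem_closure_iff]
    intro V hV hyV
    have h1 : (f ⁻¹' V ∩ U).Nonempty := mem_closure_iff.mp hx (f ⁻¹' V) (hV.preimage hf) hyV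
    obtain ⟨z, hz⟩ := hst_ne _ ((hV.preimage hf).inter hU) h1
    refine ⟨z, ?_, hst_mono _ _ Set.inter_subset_right hz⟩
    obtain ⟨w, hw, rfl⟩ := hst_sub _ hz
    exact hw.1
  -- preimage of interior of image of a closed set is in the interior
  have hpre_int : ∀ C : Set X, IsClosed C → f ⁻¹' (interior (f '' C)) ⊆ interior C := by
    intro C hC
    refine interior_maximal ?_ (isOpen_interior.preimage hf)
    intro x hx
    by_contra hxC
    have hW : IsOpen (f ⁻¹' (interior (f '' C)) ∩ Cᶜ) :=
      (isOpen_interior.preimage hf).inter hC.isOpen_compl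
    obtain ⟨y, hy⟩ := hst_ne _ hW ⟨x, hx, hxC⟩
    have hyC : y ∈ f '' C := by
      obtain ⟨w, hw, rfl⟩ := hst_sub _ hy
      exact interior_subset hw.1
    obtain ⟨x0, hx0, rfl⟩ := hyC
    exact (hst_pre _ hy).2 hx0
  -- main structural facts for members of 𝒞
  have himg_eq : ∀ C ∈ 𝒞, f '' C = closure (st (interior C)) := by
    intro C hC
    obtain ⟨-, hCcl, hCreg⟩ := hmem C hC
    apply Set.Subset.antisymm
    · intro y hy
      apply hcl (interior C) isOpen_interior
      rwa [← hCreg]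
    · refine closure_minimal ?_ (hclosedmap C hCcl)
      exact (hst_sub _).trans (Set.image_mono (f := f) interior_subset)
  have hint_eq : ∀ C ∈ 𝒞, interior (f '' C) = st (interior C) := by
    intro C hC
    obtain ⟨-, hCcl, -⟩ := hmem C hC
    apply Set.Subset.antisymm
    · intro y hy h
      obtain ⟨x, hx, rfl⟩ := h
      exact hx (hpre_int C hCcl hy)
    · exact interior_maximal ((hst_sub _).trans (Set.image_mono (f := f) interior_subset))
        (hst_open _ isOpen_interior)
  -- each image is nonempty and regular closed
  have himg_reg : ∀ C ∈ 𝒞, (f '' C).Nonempty ∧ IsRegularClosed (f '' C) := by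
    intro C hC
    obtain ⟨hCne, hCcl, hCreg⟩ := hmem C hC
    refine ⟨hCne.image f, hclosedmap C hCcl, ?_⟩
    rw [hint_eq C hC, ← himg_eq C hC]
  -- interiors of distinct images are disjoint from the other image
  have hdisj : ∀ C ∈ 𝒞, ∀ C' ∈ 𝒞, C ≠ C' → interior (f '' C) ∩ f '' C' = ∅ := by
    intro C hC C' hC' hne
    rw [hint_eq C hC]
    ext y
    simp only [Set.mem_inter_iff, Set.mem_empty_iff_false, iff_false, not_and]
    intro hy hy'
    obtain ⟨x', hx', rfl⟩ := hy'
    have hx'int : x' ∈ interior C := hst_pre _ hy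
    have : x' ∈ frontier C ∩ frontier C' :=
      hbd C hC C' hC' hne ⟨interior_subset hx'int, hx'⟩
    exact this.1.2 hx'int
  -- injectivity
  have hinj : Set.InjOn (Set.image f) 𝒞 := by
    intro C hC C' hC' heq
    by_contra hne
    have h1 : interior (f '' C) ∩ f '' C' = ∅ := hdisj C hC C' hC' hne
    have h2 : interior (f '' C) = ∅ := by
      rw [← heq] at h1
      have := Set.inter_eq_self_of_subset_left (interior_subset (s := f '' C))
      rw [this] at h1
      exact h1
    have h3 := (himg_reg C hC).2.2
    rw [h2, closure_empty] at h3
    exact ((himg_reg C hC).1.ne_empty) h3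
  refine ⟨⟨?_, ?_, ?_⟩, hinj⟩
  · rw [← Set.image_sUnion, hcov, Set.image_univ, Set.range_eq_univ.mpr hfs]
  · rintro D ⟨C, hC, rfl⟩
    exact himg_reg C hC
  · rintro D ⟨C, hC, rfl⟩ D' ⟨C', hC', rfl⟩ hne y hy
    have hCC' : C ≠ C' := by rintro rfl; exact hne rfl
    have hcl1 : IsClosed (f '' C) := (himg_reg C hC).2.1
    have hcl2 : IsClosed (f '' C') := (himg_reg C' hC').2.1
    rw [hcl1.frontier_eq, hcl2.frontier_eq]
    refine ⟨⟨hy.1, fun h => ?_⟩, ⟨hy.2, fun h => ?_⟩⟩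
    · exact Set.eq_empty_iff_forall_notMem.mp (hdisj C hC C' hC' hCC') y ⟨h, hy.2⟩
    · exact Set.eq_empty_iff_forall_notMem.mp (hdisj C' hC' C hC hCC'.symm) y ⟨h, hy.1⟩
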